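/- Let A = [[−1, −2], [−1, −1]], K = {x ∈ ℝ² : 4x₁ − x₂ ≥ 0 and 4x₂ − x₁ ≥ 0}, and V(x) = 2.9·x₁² + x₁x₂ + x₂². Consider a nonzero boundary point x of K lying on a face of K: either (a) x = t·(1, 1/4) with t > 0 (face where 4x₂ − x₁ = 0... i.e. the face {−x₁/4 + x₂ = 0}), or (b) x = t·(1/4, 1) with t > 0 (face {x₁ − x₂/4 = 0}). Let n be the outward unit-direction normal to K at x (n proportional to (1/4, −1) in case (a) and to (−1, 1/4) in case (b)), and let η_x = −(⟨Ax, n⟩/‖n‖²)·n be the negative of the Euclidean projection of Ax onto the normal ray (so that Ax + η_x is tangent to the face, i.e., ⟨Ax + η_x, n⟩ = 0). Then in both cases ⟨Ax, n⟩ > 0 and ⟨∇V(x), Ax + η_x⟩ < 0. -/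

import Mathlib

open RealInnerProductSpace

noncomputable section

/-- `A = [[−1, −2], [−1, −1]]`. -/
def Amat : Matrix (Fin 2) (Fin 2) ℝ := !![-1, -2; -1, -1]

/-- The linear vector field `x ↦ Ax` on Euclidean `ℝ²`. -/
def Amap (x : EuclideanSpace ℝ (Fin 2)) : EuclideanSpace ℝ (Fin 2) :=
  Matrix.toEuclideanLin Amat x

/-- `V(x) = 2.9 x₁² + x₁x₂ + x₂²`. -/
def Vquad (x : EuclideanSpace ℝ (Fin 2)) : ℝ :=
  2.9 * (x 0) ^ 2 + x 0 * x 1 + (x 1) ^ 2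

/-- Generator `(1, 1/4)` of the face `{4x₂ − x₁ = 0}` of `K`. -/
def va : EuclideanSpace ℝ (Fin 2) := (EuclideanSpace.equiv (Fin 2) ℝ).symm ![1, 1/4]

/-- Outward normal direction `(1/4, −1)` to `K` on the face `{4x₂ − x₁ = 0}`. -/
def na : EuclideanSpace ℝ (Fin 2) := (EuclideanSpace.equiv (Fin 2) ℝ).symm ![1/4, -1]

/-- Generator `(1/4, 1)` of the face `{4x₁ − x₂ = 0}` of `K`. -/
def vb : EuclideanSpace ℝ (Fin 2) := (EuclideanSpace.equiv (Fin 2) ℝ).symm ![1/4, 1]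

/-- Outward normal direction `(−1, 1/4)` to `K` on the face `{4x₁ − x₂ = 0}`. -/
def nb : EuclideanSpace ℝ (Fin 2) := (EuclideanSpace.equiv (Fin 2) ℝ).symm ![-1, 1/4]

/-- The projected-dynamics correction term `η_x = −(⟨Ax, n⟩/‖n‖²) n`, the negative of the
Euclidean projection of `Ax` onto the normal ray spanned by `n`. -/
def eta (x n : EuclideanSpace ℝ (Fin 2)) : EuclideanSpace ℝ (Fin 2) :=
  -((⟪Amap x, n⟫ / ‖n‖ ^ 2) • n)

lemma gradient_Vquad (x : EuclideanSpace ℝ (Fin 2)) :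
    gradient Vquad x = (EuclideanSpace.equiv (Fin 2) ℝ).symm ![5.8 * x 0 + x 1, x 0 + 2 * x 1] := by
  refine HasGradientAt.gradient ?_
  rw [hasGradientAt_iff_hasFDerivAt]
  have h0 : HasFDerivAt (fun y : EuclideanSpace ℝ (Fin 2) => (y 0 : ℝ))
      (EuclideanSpace.proj (0:Fin 2) : EuclideanSpace ℝ (Fin 2) →L[ℝ] ℝ) x :=
    (EuclideanSpace.proj (0 : Fin 2) : EuclideanSpace ℝ (Fin 2) →L[ℝ] ℝ).hasFDerivAt
  have h1 : HasFDerivAt (fun y : EuclideanSpace ℝ (Fin 2) => (y 1 : ℝ))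
      (EuclideanSpace.proj (1:Fin 2) : EuclideanSpace ℝ (Fin 2) →L[ℝ] ℝ) x :=
    (EuclideanSpace.proj (1 : Fin 2) : EuclideanSpace ℝ (Fin 2) →L[ℝ] ℝ).hasFDerivAt
  have h := ((((h0.mul h0).const_mul 2.9).add (h0.mul h1)).add (h1.mul h1))
  convert h using 1
  · rfl
  · rfl
  · ext y
    simp [Vquad]
    ring
  · ext y
    simp [InnerProductSpace.toDual_apply_apply, PiLp.inner_apply, Fin.sum_univ_two]
    ring

/-- at every nonzero point `x` of either face of the cone
`K = {x : 4x₁ − x₂ ≥ 0, 4x₂ − x₁ ≥ 0}`, the vector field `Ax` points outward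
(`⟨Ax, n⟩ > 0`), the corrected vector `Ax + η_x` is tangent to the face
(`⟨Ax + η_x, n⟩ = 0`), and `V` strictly decreases along the projected dynamics:
`⟨∇V(x), Ax + η_x⟩ < 0`. -/
theorem example_boundary_projection_decrease :
    ∀ t : ℝ, 0 < t →
      (0 < ⟪Amap (t • va), na⟫ ∧
        ⟪Amap (t • va) + eta (t • va) na, na⟫ = 0 ∧
        ⟪gradient Vquad (t • va), Amap (t • va) + eta (t • va) na⟫ < 0) ∧
      (0 < ⟪Amap (t • vb), nb⟫ ∧
        ⟪Amap (t • vb) + eta (t • vb) nb, nb⟫ = 0 ∧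
        ⟪gradient Vquad (t • vb), Amap (t • vb) + eta (t • vb) nb⟫ < 0) := by
  intro t ht
  have hsq : ∀ n : EuclideanSpace ℝ (Fin 2), (‖n‖:ℝ) ^ 2 = ⟪n, n⟫ :=
    fun n => (real_inner_self_eq_norm_sq n).symm
  refine ⟨⟨?_, ?_, ?_⟩, ⟨?_, ?_, ?_⟩⟩ <;>
    simp only [gradient_Vquad, EuclideanSpace.equiv, eta, hsq, Amap, Amat, va, na, vb, nb, inner_add_left,
      inner_neg_left, inner_smul_left, PiLp.inner_apply, Fin.sum_univ_two, PiLp.add_apply,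
      PiLp.neg_apply, PiLp.smul_apply, smul_eq_mul, 
      Matrix.toEuclideanLin_apply, WithLp.equiv_symm_apply, PiLp.toLp_apply,
      Matrix.mulVec, dotProduct, Matrix.cons_val', Matrix.cons_val_zero,
      Matrix.cons_val_one, Matrix.head_cons, Matrix.empty_val', Matrix.cons_val_fin_one,
      Matrix.head_fin_const, RCLike.inner_apply, conj_trivial] <;>
    [skip; skip; skip; skip; skip; skip] <;>
    (try norm_num) <;> nlinarith [ht, mul_pos ht ht, sq_nonneg t]

end
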